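/- For all ξ, η ∈ ℝ² with ξ, η, ξ−η nonzero, the gradient of the phase Φ(ξ,η) = ξ₁/|ξ|² − (ξ₁−η₁)/|ξ−η|² − η₁/|η|² with respect to η satisfies |∇_η Φ(ξ,η)| = |ξ| |ξ−2η| / (|ξ−η|² |η|²). -/

import Mathlib

noncomputable def Phi (ξ η : EuclideanSpace ℝ (Fin 2)) : ℝ :=
  ξ 0 / ‖ξ‖ ^ 2 - (ξ 0 - η 0) / ‖ξ - η‖ ^ 2 - η 0 / ‖η‖ ^ 2

set_option maxHeartbeats 1600000

open scoped RealInnerProductSpace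

noncomputable abbrev E2 := EuclideanSpace ℝ (Fin 2)

noncomputable def wvec (p : E2) : E2 :=
  (‖p‖ ^ 2)⁻¹ • EuclideanSpace.single 0 (1 : ℝ) - (2 * p 0 / ‖p‖ ^ 4) • p

lemma hasGradientAt_g (p : E2) (hp : p ≠ 0) :
    HasGradientAt (fun θ : E2 => θ 0 / ‖θ‖ ^ 2) (wvec p) p := by
  rw [hasGradientAt_iff_hasFDerivAt]
  have hn : ‖p‖ ≠ 0 := norm_ne_zero_iff.mpr hp
  have hns : ‖p‖ ^ 2 ≠ 0 := pow_ne_zero 2 hn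
  have h1 : HasFDerivAt (fun θ : E2 => θ 0) (EuclideanSpace.proj (0 : Fin 2) : E2 →L[ℝ] ℝ) p :=
    (EuclideanSpace.proj (0 : Fin 2) : E2 →L[ℝ] ℝ).hasFDerivAt
  have h2 : HasFDerivAt (fun θ : E2 => ‖θ‖ ^ 2) (2 • (innerSL ℝ p)) p :=
    (hasStrictFDerivAt_norm_sq p).hasFDerivAt
  have h3 : HasFDerivAt (fun θ : E2 => (‖θ‖ ^ 2)⁻¹)
      ((-((‖p‖ ^ 2) ^ 2)⁻¹) • (2 • (innerSL ℝ p))) p :=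
    (hasDerivAt_inv hns).comp_hasFDerivAt p h2
  have h4 := h1.mul h3
  simp only [div_eq_mul_inv]
  refine (h4.congr_of_eventuallyEq (Filter.Eventually.of_forall fun θ => ?_)).congr_fderiv ?_
  · simp [div_eq_mul_inv]
  ext u
  simp only [wvec, InnerProductSpace.toDual_apply_apply, inner_sub_left, real_inner_smul_left,
    EuclideanSpace.inner_single_left, ContinuousLinearMap.add_apply,
    ContinuousLinearMap.smul_apply, ContinuousLinearMap.coe_smul', Pi.smul_apply,
    innerSL_apply_apply, PiLp.proj_apply, smul_eq_mul, map_one, conj_trivial]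
  field_simp
  ring

lemma norm_sq_eq (x : E2) : ‖x‖ ^ 2 = x 0 ^ 2 + x 1 ^ 2 := by
  rw [EuclideanSpace.norm_eq, Real.sq_sqrt (by positivity)]
  simp [Fin.sum_univ_two, sq_abs]

lemma hasGradientAt_Phi (ξ η : E2) (hη : η ≠ 0) (hξη : ξ - η ≠ 0) :
    HasGradientAt (fun θ => Phi ξ θ) (wvec (ξ - η) - wvec η) η := by
  rw [hasGradientAt_iff_hasFDerivAt]
  have hA : HasFDerivAt (fun θ : E2 => ξ - θ)
      (-(ContinuousLinearMap.id ℝ E2)) η := by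
    have := (hasFDerivAt_const (𝕜 := ℝ) ξ η).sub (hasFDerivAt_id (𝕜 := ℝ) η)
    rw [zero_sub] at this
    exact this
  have hg1 := ((hasGradientAt_g (ξ - η) hξη).hasFDerivAt).comp η hA
  have hg2 := (hasGradientAt_g η hη).hasFDerivAt
  have hf := ((hasFDerivAt_const (𝕜 := ℝ) (ξ 0 / ‖ξ‖ ^ 2) η).sub hg1).sub hg2
  have heq : (fun θ : E2 => Phi ξ θ) =
      (fun θ : E2 => ξ 0 / ‖ξ‖ ^ 2 - (fun p : E2 => p 0 / ‖p‖ ^ 2) (ξ - θ)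
        - (fun p : E2 => p 0 / ‖p‖ ^ 2) θ) := by
    funext θ
    simp [Phi]
  rw [heq]
  refine (hf.congr_of_eventuallyEq (Filter.Eventually.of_forall fun θ => ?_)).congr_fderiv ?_
  · rfl
  ext u
  simp [inner_sub_left, inner_neg_right]

theorem norm_grad_eta_Phi (ξ η : EuclideanSpace ℝ (Fin 2))
    (hξ : ξ ≠ 0) (hη : η ≠ 0) (hξη : ξ - η ≠ 0) :
    ‖gradient (fun θ => Phi ξ θ) η‖ =
      ‖ξ‖ * ‖ξ - (2 : ℝ) • η‖ / (‖ξ - η‖ ^ 2 * ‖η‖ ^ 2) := by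
  rw [(hasGradientAt_Phi ξ η hη hξη).gradient]
  set v : E2 := wvec (ξ - η) - wvec η with hv
  set R := ‖ξ‖ * ‖ξ - (2 : ℝ) • η‖ / (‖ξ - η‖ ^ 2 * ‖η‖ ^ 2) with hR
  set a := ξ 0 - η 0 with ha
  set b := ξ 1 - η 1 with hb
  set c := η 0 with hc
  set d := η 1 with hd
  set S := ‖ξ - η‖ ^ 2 with hS
  set T := ‖η‖ ^ 2 with hT
  have hs : ‖ξ - η‖ ≠ 0 := norm_ne_zero_iff.mpr hξη
  have ht : ‖η‖ ≠ 0 := norm_ne_zero_iff.mpr hη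
  have hS0 : S ≠ 0 := pow_ne_zero 2 hs
  have hT0 : T ≠ 0 := pow_ne_zero 2 ht
  have hRnn : 0 ≤ R := by rw [hR]; positivity
  have hv2 : ‖v‖ ^ 2 = R ^ 2 := by
    have hsub0 : (ξ - η) 0 = a := rfl
    have hsub1 : (ξ - η) 1 = b := rfl
    have h2s0 : (ξ - (2 : ℝ) • η) 0 = (a + c) - 2 * c := by
      show ξ 0 - 2 * η 0 = _; rw [ha, hc]; ring
    have h2s1 : (ξ - (2 : ℝ) • η) 1 = (b + d) - 2 * d := by
      show ξ 1 - 2 * η 1 = _; rw [hb, hd]; ring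
    have hxi0 : ξ 0 = a + c := by rw [ha, hc]; ring
    have hxi1 : ξ 1 = b + d := by rw [hb, hd]; ring
    have h4s : ‖ξ - η‖ ^ 4 = S ^ 2 := by rw [hS]; ring
    have h4t : ‖η‖ ^ 4 = T ^ 2 := by rw [hT]; ring
    have hv0 : v 0 = ((S - 2 * a ^ 2) * T ^ 2 - (T - 2 * c ^ 2) * S ^ 2) / (S ^ 2 * T ^ 2) := by
      have : v 0 = S⁻¹ - 2 * a ^ 2 / S ^ 2 - (T⁻¹ - 2 * c ^ 2 / T ^ 2) := by
        simp [hv, wvec, EuclideanSpace.single_apply, hsub0, h4s, h4t, ← hc]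
        ring
      rw [this]; field_simp
    have hv1 : v 1 = (2 * c * d * S ^ 2 - 2 * a * b * T ^ 2) / (S ^ 2 * T ^ 2) := by
      have : v 1 = -(2 * a * b / S ^ 2) + 2 * c * d / T ^ 2 := by
        simp [hv, wvec, EuclideanSpace.single_apply, hsub1, h4s, h4t, ← hc, ← hd]
        ring
      rw [this]; field_simp; ring
    have e1 := norm_sq_eq v
    have e2 : S = a ^ 2 + b ^ 2 := by
      rw [hS, norm_sq_eq, hsub0, hsub1]
    have e3 : T = c ^ 2 + d ^ 2 := by rw [hT, norm_sq_eq, hc, hd]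
    have e4 : ‖ξ‖ ^ 2 = (a + c) ^ 2 + (b + d) ^ 2 := by
      rw [norm_sq_eq, hxi0, hxi1]
    have e5 : ‖ξ - (2 : ℝ) • η‖ ^ 2 = ((a + c) - 2 * c) ^ 2 + ((b + d) - 2 * d) ^ 2 := by
      rw [norm_sq_eq, h2s0, h2s1]
    have hR2 : R ^ 2 = (‖ξ‖ ^ 2 * ‖ξ - (2 : ℝ) • η‖ ^ 2 * S ^ 2 * T ^ 2) / ((S ^ 2 * T ^ 2) ^ 2) := by
      rw [hR]; field_simp
    rw [e1, hv0, hv1, hR2, div_pow, div_pow, ← add_div]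
    congr 1
    rw [e2, e3, e4, e5]
    ring
  calc ‖v‖ = Real.sqrt (‖v‖ ^ 2) := (Real.sqrt_sq (norm_nonneg _)).symm
    _ = Real.sqrt (R ^ 2) := by rw [hv2]
    _ = R := Real.sqrt_sq hRnn
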